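/- Let N ≥ 1, and μ ∈ K nonzero. Define a product on K[X] by X^i ∙ X^j = i·μ·X^{i+j} if j ≥ 1 and N divides j, X^i ∙ X^0 = i·λ·X^i for some λ ∈ K, and X^i ∙ X^j = 0 otherwise. Then this product satisfies the right preLie identity. -/
import Mathlib


open Polynomial

theorem stmt_6 (K : Type*) [Field K] [CharZero K] (N : ℕ) (hN : 1 ≤ N)
    (lam mu : K) (hmu : mu ≠ 0)
    (B : K[X] →ₗ[K] K[X] →ₗ[K] K[X])
    (hB0 : ∀ i : ℕ, B (X ^ i) (X ^ 0) = ((i : K) * lam) • X ^ i)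
    (hBdvd : ∀ i j : ℕ, 1 ≤ j → N ∣ j →
      B (X ^ i) (X ^ j) = ((i : K) * mu) • X ^ (i + j))
    (hBother : ∀ i j : ℕ, 1 ≤ j → ¬ N ∣ j → B (X ^ i) (X ^ j) = 0) :
    ∀ P Q R : K[X], B (B P Q) R - B P (B Q R) = B (B P R) Q - B P (B R Q) := by
  have hB0' : ∀ i : ℕ, B ((X : K[X]) ^ i) 1 = ((i : K) * lam) • X ^ i := by
    intro i; simpa using hB0 i
  have key : ∀ i j k : ℕ,
      B (B ((X : K[X]) ^ i) (X ^ j)) (X ^ k) - B (X ^ i) (B (X ^ j) (X ^ k)) =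
      B (B (X ^ i) (X ^ k)) (X ^ j) - B (X ^ i) (B (X ^ k) (X ^ j)) := by
    intro i j k
    rcases Nat.eq_zero_or_pos j with hj | hj
    · subst hj
      rcases Nat.eq_zero_or_pos k with hk | hk
      · subst hk; rfl
      · rcases em (N ∣ k) with hdk | hdk
        · have h1 : B (1 : K[X]) (X ^ k) = 0 := by
            simpa using hBdvd 0 k hk hdk
          simp only [pow_zero, hB0' i, hB0' k, hB0' (i + k), h1, hBdvd i k hk hdk,
            map_smul, LinearMap.smul_apply, map_zero, smul_smul]
          simp only [smul_eq_C_mul, map_mul, map_add, map_natCast, Nat.cast_add]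
          ring
        · have h1 : B (1 : K[X]) (X ^ k) = 0 := by
            simpa using hBother 0 k hk hdk
          simp only [pow_zero, hB0' i, hB0' k, h1, hBother i k hk hdk,
            map_smul, LinearMap.smul_apply, map_zero, LinearMap.zero_apply,
            smul_zero, sub_zero, zero_sub, sub_self, neg_zero]
    · rcases em (N ∣ j) with hdj | hdj
      · rcases Nat.eq_zero_or_pos k with hk | hk
        · subst hk
          have h1 : B (1 : K[X]) (X ^ j) = 0 := by
            simpa using hBdvd 0 j hj hdj
          simp only [pow_zero, hB0' i, hB0' j, hB0' (i + j), h1,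
            hBdvd i j hj hdj, map_smul, LinearMap.smul_apply, map_zero,
            smul_zero, sub_zero, smul_smul]
          simp only [smul_eq_C_mul, map_mul, map_add, map_natCast, Nat.cast_add]
          ring
        · rcases em (N ∣ k) with hdk | hdk
          · have hjk : 1 ≤ j + k := le_trans hj (Nat.le_add_right j k)
            have hkj : 1 ≤ k + j := le_trans hk (Nat.le_add_right k j)
            have hdjk : N ∣ j + k := Dvd.dvd.add hdj hdk
            have hdkj : N ∣ k + j := Dvd.dvd.add hdk hdj
            simp only [hBdvd i j hj hdj, hBdvd j k hk hdk, hBdvd i k hk hdk,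
              hBdvd k j hj hdj, map_smul, LinearMap.smul_apply,
              hBdvd (i + j) k hk hdk, hBdvd i (j + k) hjk hdjk,
              hBdvd (i + k) j hj hdj, hBdvd i (k + j) hkj hdkj, smul_smul]
            simp only [smul_eq_C_mul, map_mul, map_add, map_natCast, Nat.cast_add]
            ring
          · have hdjk : ¬ N ∣ j + k := fun h => hdk ((Nat.dvd_add_right hdj).mp h)
            have hdkj : ¬ N ∣ k + j := by rwa [Nat.add_comm] at hdjk
            simp only [hBdvd i j hj hdj, hBother j k hk hdk,
              hBother i k hk hdk, hBdvd k j hj hdj, map_smul,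
              LinearMap.smul_apply, map_zero, LinearMap.zero_apply,
              hBother (i + j) k hk hdk,
              hBother i (k + j) (le_trans hk (Nat.le_add_right k j)) hdkj,
              smul_zero, sub_zero, zero_sub, sub_self, neg_zero]
      · rcases Nat.eq_zero_or_pos k with hk | hk
        · subst hk
          have h1 : B (1 : K[X]) (X ^ j) = 0 := by
            simpa using hBother 0 j hj hdj
          simp only [pow_zero, hB0' i, hB0' j, h1, hBother i j hj hdj,
            map_smul, LinearMap.smul_apply, map_zero, LinearMap.zero_apply,
            smul_zero, sub_zero, zero_sub, sub_self, neg_zero]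
        · rcases em (N ∣ k) with hdk | hdk
          · have hdkj : ¬ N ∣ k + j := fun h => hdj ((Nat.dvd_add_right hdk).mp h)
            have hdjk : ¬ N ∣ j + k := by rwa [Nat.add_comm] at hdkj
            simp only [hBother i j hj hdj, hBdvd j k hk hdk,
              hBdvd i k hk hdk, hBother k j hj hdj, map_smul,
              LinearMap.smul_apply, map_zero, LinearMap.zero_apply,
              hBother (i + k) j hj hdj,
              hBother i (j + k) (le_trans hj (Nat.le_add_right j k)) hdjk,
              smul_zero, sub_zero, zero_sub, sub_self, neg_zero]
          · simp only [hBother i j hj hdj, hBother j k hk hdk,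
              hBother i k hk hdk, hBother k j hj hdj, map_zero,
              LinearMap.zero_apply, smul_zero, sub_zero, sub_self]
  intro P Q R
  induction P using Polynomial.induction_on' with
  | add P1 P2 h1 h2 =>
    simp only [map_add, LinearMap.add_apply]
    linear_combination h1 + h2
  | monomial i a =>
    induction Q using Polynomial.induction_on' with
    | add Q1 Q2 h1 h2 =>
      simp only [map_add, LinearMap.add_apply]
      linear_combination h1 + h2
    | monomial j b =>
      induction R using Polynomial.induction_on' with
      | add R1 R2 h1 h2 =>
        simp only [map_add, LinearMap.add_apply]
        linear_combination h1 + h2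
      | monomial k c =>
        rw [← Polynomial.smul_X_eq_monomial, ← Polynomial.smul_X_eq_monomial,
          ← Polynomial.smul_X_eq_monomial]
        simp only [map_smul, LinearMap.smul_apply, smul_smul]
        rw [show c * (b * a) = a * (b * c) by ring,
          show c * b * a = a * (b * c) by ring,
          show b * (c * a) = a * (b * c) by ring,
          show b * c * a = a * (b * c) by ring,
          ← smul_sub, ← smul_sub, key]
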